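/- Let V be a partial order viewed as a category, ♭ : V → V monotone with ♭(v) ≤ v and ♭(♭(v)) = ♭(v), J the quantization Grothendieck topology on V, and b : V ⥤ V the functor induced by ♭. For each presheaf Q : V^op ⥤ Type let ♭*Q = b.op ⋙ Q, and let ζ_Q : Q ⟶ ♭*Q be the natural transformation whose component at v is the restriction map Q(♭(v) ⟶ v) : Q(v) → Q(♭(v)). Then for every presheaf Q, every J-sheaf R, and every natural transformation α : Q ⟶ R, there exists a unique natural transformation β : ♭*Q ⟶ R such that β ∘ ζ_Q = α. (Thus ♭*, with unit ζ, is the associated sheaf functor: it is left adjoint to the inclusion of J-sheaves into presheaves.) -/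

import Mathlib

open CategoryTheory

/-- The quantization Grothendieck topology on a partial order `V` induced by a
monotone idempotent deflation `♭ : V → V`: a sieve on `v` covers iff it contains
the morphism `♭(v) ⟶ v`. -/
def quantTopology {V : Type*} [PartialOrder V] {b : V → V} (hb : Monotone b)
    (hle : ∀ v, b v ≤ v) (hidem : ∀ v, b (b v) = b v) :
    GrothendieckTopology V where
  sieves v := { S | S.arrows (homOfLE (hle v)) }
  top_mem' v := trivial
  pullback_stable' := by
    intro v v' S f hS
    exact S.downward_closed hS (homOfLE (hb (leOfHom f)))
  transitive' := by
    intro v S hS R hR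
    have key : ∀ {x y : V} (_ : x = y) (hx : x ≤ v) (hy : y ≤ v),
        R.arrows (homOfLE hx) → R.arrows (homOfLE hy) := by
      rintro x y rfl hx hy h
      exact h
    exact key (hidem v) ((hle (b v)).trans (hle v)) (hle v) (hR hS)


/-- The unit `ζ_Q : Q ⟶ ♭*Q` of the sheafification: its component at `v` is the
restriction map `Q(♭(v) ⟶ v) : Q(v) → Q(♭(v))`. -/
def zeta {V : Type*} [PartialOrder V] {b : V → V} (hb : Monotone b)
    (hle : ∀ v, b v ≤ v) (Q : Vᵒᵖ ⥤ Type*) : Q ⟶ hb.functor.op ⋙ Q where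
  app U := Q.map (homOfLE (hle U.unop)).op
  naturality := by
    intro U U' i
    dsimp
    rw [← Q.map_comp, ← Q.map_comp]
    rfl

/-- `♭*` with unit `ζ` is the associated sheaf functor: for every
presheaf `Q`, every sheaf `R` for the quantization topology, and every natural
transformation `α : Q ⟶ R`, there is a unique `β : ♭*Q ⟶ R` with `ζ_Q ≫ β = α`. -/
theorem flatStar_is_sheafification.{w, u}
    {V : Type u} [PartialOrder V] {b : V → V} (hb : Monotone b)
    (hle : ∀ v, b v ≤ v) (hidem : ∀ v, b (b v) = b v)
    (Q R : Vᵒᵖ ⥤ Type w)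
    (hR : Presieve.IsSheaf (quantTopology hb hle hidem) R)
    (α : Q ⟶ R) :
    ∃! β : (hb.functor.op ⋙ Q) ⟶ R, zeta hb hle Q ≫ β = α := by
  classical
  -- parallel morphisms in a poset (or its opposite) are equal
  have meq : ∀ (F : Vᵒᵖ ⥤ Type w) {X Y : Vᵒᵖ} (f g : X ⟶ Y), F.map f = F.map g := by
    intro F X Y f g
    congr 1
    rcases f with ⟨⟨hf⟩⟩
    rcases g with ⟨⟨hg⟩⟩
    rw [Subsingleton.elim hf hg]
  -- the restriction map R(v) → R(♭ v) is bijective, since R is a sheaf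
  have hbij : ∀ v : V, Function.Bijective (R.map (homOfLE (hle v)).op) := by
    intro v
    let S : Sieve v := ⟨fun u _ => u ≤ b v, fun h g => le_trans (leOfHom g) h⟩
    have hScov : S ∈ (quantTopology hb hle hidem) v := le_refl (b v)
    have hsh := hR S hScov
    constructor
    · intro x y hxy
      refine hsh.isSeparatedFor (fun u f hf => R.map f.op x) x y (fun u f hf => rfl) ?_
      intro u f hf
      have hf' : u ≤ b v := hf
      calc R.map f.op y = R.map ((homOfLE hf' ≫ homOfLE (hle v)).op) y := by
            rw [meq R f.op ((homOfLE hf' ≫ homOfLE (hle v)).op)]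
        _ = R.map (homOfLE hf').op (R.map (homOfLE (hle v)).op y) := by
            rw [op_comp, R.map_comp]; rfl
        _ = R.map (homOfLE hf').op (R.map (homOfLE (hle v)).op x) := by rw [← hxy]
        _ = R.map ((homOfLE hf' ≫ homOfLE (hle v)).op) x := by
            rw [op_comp, R.map_comp]; rfl
        _ = R.map f.op x := by rw [meq R ((homOfLE hf' ≫ homOfLE (hle v)).op) f.op]
    · intro y
      have hcomp : Presieve.FamilyOfElements.Compatible
          (fun u (f : u ⟶ v) (hf : S.arrows f) => R.map (homOfLE (show u ≤ b v from hf)).op y) := by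
        intro u1 u2 u3 g1 g2 f1 f2 h1 h2 _
        dsimp
        rw [← FunctorToTypes.map_comp_apply, ← FunctorToTypes.map_comp_apply]
        exact ConcreteCategory.congr_hom (meq R _ _) y
      obtain ⟨x, hx, -⟩ := hsh _ hcomp
      refine ⟨x, ?_⟩
      have h1 := hx (homOfLE (hle v)) (le_refl (b v))
      have h2 : homOfLE (le_refl (b v)) = 𝟙 (b v) := rfl
      rw [h1]
      show R.map (homOfLE (le_refl (b v))).op y = y
      rw [h2]
      simp
  set e : ∀ v : V, R.obj (Opposite.op v) ≃ R.obj (Opposite.op (b v)) :=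
    fun v => Equiv.ofBijective _ (hbij v) with he
  have he_app : ∀ (v : V) (x : R.obj (Opposite.op v)),
      e v x = R.map (homOfLE (hle v)).op x := fun _ _ => rfl
  -- the candidate β
  refine ⟨{ app := fun U => TypeCat.ofHom (fun q => (e U.unop).symm (α.app (Opposite.op (b U.unop)) q)),
            naturality := ?_ }, ?_, ?_⟩
  · intro U U' i
    ext q
    apply (e U'.unop).injective
    dsimp
    show e U'.unop ((e U'.unop).symm (α.app (Opposite.op (b U'.unop)) ((hb.functor.op ⋙ Q).map i q))) = e U'.unop (R.map i ((e U.unop).symm (α.app (Opposite.op (b U.unop)) q)))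
    rw [Equiv.apply_symm_apply, he_app]
    symm
    have hbv : b U'.unop ≤ b U.unop := hb (leOfHom i.unop)
    calc R.map (homOfLE (hle U'.unop)).op
          (R.map i ((e U.unop).symm (α.app (Opposite.op (b U.unop)) q)))
        = R.map (i ≫ (homOfLE (hle U'.unop)).op)
            ((e U.unop).symm (α.app (Opposite.op (b U.unop)) q)) := by
          rw [R.map_comp]; rfl
      _ = R.map ((homOfLE (hle U.unop)).op ≫ (homOfLE hbv).op)
            ((e U.unop).symm (α.app (Opposite.op (b U.unop)) q)) := by
          rw [meq R (i ≫ (homOfLE (hle U'.unop)).op) ((homOfLE (hle U.unop)).op ≫ (homOfLE hbv).op)]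
      _ = R.map (homOfLE hbv).op
            (e U.unop ((e U.unop).symm (α.app (Opposite.op (b U.unop)) q))) := by
          rw [R.map_comp]; rfl
      _ = R.map (homOfLE hbv).op (α.app (Opposite.op (b U.unop)) q) := by
          rw [Equiv.apply_symm_apply]
      _ = α.app (Opposite.op (b U'.unop)) (Q.map (homOfLE hbv).op q) := by
          exact (ConcreteCategory.congr_hom (α.naturality (homOfLE hbv).op) q).symm
      _ = α.app (Opposite.op (b U'.unop)) ((hb.functor.op ⋙ Q).map i q) := by
          exact congrArg _ (ConcreteCategory.congr_hom (meq Q (homOfLE hbv).op (hb.functor.op.map i)) q)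
  · -- ζ ≫ β = α
    ext U q
    dsimp [zeta]
    apply (e U.unop).injective
    rw [Equiv.apply_symm_apply, he_app]
    simpa using ConcreteCategory.congr_hom (α.naturality (homOfLE (hle U.unop)).op) q
  · -- uniqueness
    intro β hβ
    ext U q
    apply (e U.unop).injective
    have hnat := ConcreteCategory.congr_hom (β.naturality (homOfLE (hle U.unop)).op) q
    dsimp at hnat
    rw [he_app]
    calc R.map (homOfLE (hle U.unop)).op (β.app U q)
        = β.app (Opposite.op (b U.unop)) (Q.map (homOfLE (hb (hle U.unop))).op q) := hnat.symm
      _ = β.app (Opposite.op (b U.unop)) (Q.map (homOfLE (hle (b U.unop))).op q) := by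
          rw [meq Q (homOfLE (hb (hle U.unop))).op (homOfLE (hle (b U.unop))).op]
      _ = (zeta hb hle Q ≫ β).app (Opposite.op (b U.unop)) q := rfl
      _ = α.app (Opposite.op (b U.unop)) q := by rw [hβ]
      _ = e U.unop ((e U.unop).symm (α.app (Opposite.op (b U.unop)) q)) := by
          rw [Equiv.apply_symm_apply]
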